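/- Let k ≥ 2 be an integer. If a word w contains a factor that is the concatenation of k consecutive factors of the same length n ≥ 1 among which at least two are equal, then w contains a factor that is an ℓ-power for some rational ℓ ≥ k/(k-1), i.e., w contains a factor of the form (xy)^α·x with xy non-empty and α + |x|/|xy| ≥ k/(k-1). -/

import Mathlib

/-- Let `k ≥ 2`. If a word `w` contains a factor `u` that is a
concatenation of `k` consecutive factors of the same length `n ≥ 1` among which
at least two are equal, then `w` contains a factor of the form `(xy)^α ++ x`
with `xy` non-empty and `α + |x|/|xy| ≥ k/(k-1)`. -/
theorem repeated_block_gives_fractional_power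
    {A : Type*} (k n : ℕ) (hk : 2 ≤ k) (hn : 1 ≤ n) (w u : List A)
    (hu : u <:+: w) (l : List (List A)) (hlk : l.length = k)
    (hln : ∀ v ∈ l, v.length = n) (hjoin : u = l.flatten)
    (hrep : ∃ i j : Fin l.length, i < j ∧ l.get i = l.get j) :
    ∃ (x y : List A) (α : ℕ), x ++ y ≠ [] ∧
      ((List.replicate α (x ++ y)).flatten ++ x) <:+: w ∧
      (k : ℚ) / ((k : ℚ) - 1) ≤ (α : ℚ) + (x.length : ℚ) / ((x ++ y).length : ℚ) := by
  obtain ⟨i, j, hij, heq⟩ := hrep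
  set x : List A := l.get i with hx
  set mid : List (List A) := (l.drop (i+1)).take ((j:ℕ) - i - 1) with hmid
  set y : List A := mid.flatten with hy
  refine ⟨x, y, 1, ?_, ?_, ?_⟩
  · have hxmem : x ∈ l := by rw [hx, List.get_eq_getElem]; exact List.getElem_mem _
    have : x.length = n := hln _ hxmem
    simp only [ne_eq, List.append_eq_nil_iff]
    rintro ⟨hx0, -⟩
    rw [hx0] at this; simp at this; omega
  · -- structure: l = take i ++ x :: mid ++ (l.get j) :: drop (j+1)
    have hsplit : l = l.take i ++ x :: (mid ++ l.get j :: l.drop ((j:ℕ)+1)) := by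
      have h1 : l = l.take i ++ l.drop i := (List.take_append_drop _ _).symm
      have h2 : l.drop (i:ℕ) = x :: l.drop ((i:ℕ)+1) := by
        rw [List.drop_eq_getElem_cons i.isLt]; rfl
      have h3 : l.drop ((i:ℕ)+1) = mid ++ (l.drop ((i:ℕ)+1)).drop ((j:ℕ) - i - 1) := by
        rw [hmid]; exact (List.take_append_drop _ _).symm
      have h4 : (l.drop ((i:ℕ)+1)).drop ((j:ℕ) - (i:ℕ) - 1) = l.drop (j:ℕ) := by
        rw [List.drop_drop]
        congr 1
        omega
      have h5 : l.drop (j:ℕ) = l.get j :: l.drop ((j:ℕ)+1) := by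
        rw [List.drop_eq_getElem_cons j.isLt]; rfl
      nth_rewrite 1 [h1, h2, h3, h4, h5]
      simp
    have hflat : l.flatten = (l.take (i:ℕ)).flatten ++ (x ++ (y ++ (x ++ (l.drop ((j:ℕ)+1)).flatten))) := by
      conv_lhs => rw [hsplit]
      rw [← heq]
      simp [hy, List.flatten_append]
    have hinf : (x ++ y ++ x) <:+: l.flatten := by
      refine ⟨(l.take (i:ℕ)).flatten, (l.drop ((j:ℕ)+1)).flatten, ?_⟩
      rw [hflat]; simp [List.append_assoc]
    simp only [List.replicate_one, List.flatten_cons, List.flatten_nil, List.append_nil]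
    calc (x ++ y) ++ x = x ++ y ++ x := by simp
    _ <:+: l.flatten := hinf
    _ = u := hjoin.symm
    _ <:+: w := hu
  · have hxmem : x ∈ l := by rw [hx, List.get_eq_getElem]; exact List.getElem_mem _
    have hxlen : x.length = n := hln _ hxmem
    have hmidlen : ∀ v ∈ mid, v.length = n := fun v hv => hln v (List.mem_of_mem_drop (List.mem_of_mem_take hv))
    have hylen : y.length = ((j:ℕ) - i - 1) * n := by
      rw [hy, List.length_flatten]
      rw [List.map_congr_left hmidlen]
      have hlen : mid.length = (j:ℕ) - i - 1 := by
        rw [hmid, List.length_take, List.length_drop]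
        have := j.isLt
        omega
      simp [hlen, mul_comm]
    set d : ℕ := (j:ℕ) - i with hd
    have hd1 : 1 ≤ d := by omega
    have hdk : d ≤ k - 1 := by have := j.isLt; omega
    have hxy : ((x ++ y).length : ℚ) = (d : ℚ) * n := by
      push_cast [List.length_append, hxlen, hylen]
      have : (d:ℚ) = ((d - 1 : ℕ) : ℚ) + 1 := by push_cast [Nat.cast_sub hd1]; ring
      rw [this]; ring
    rw [hxy]
    have hn' : (0:ℚ) < n := by exact_mod_cast hn
    have hd' : (0:ℚ) < d := by exact_mod_cast hd1
    have hk' : (0:ℚ) < (k:ℚ) - 1 := by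
      have : (2:ℚ) ≤ k := by exact_mod_cast hk
      linarith
    have hdk' : (d:ℚ) ≤ (k:ℚ) - 1 := by
      have h1 : d + 1 ≤ k := by omega
      have h2 : ((d:ℕ):ℚ) + 1 ≤ (k:ℚ) := by exact_mod_cast Nat.cast_le.mpr h1
      linarith
    rw [hxlen, show ((n:ℚ))/((d:ℚ)*n) = 1/d from by field_simp]
    rw [div_le_iff₀ hk', show ((1:ℕ):ℚ) + 1/d = ((d:ℚ)+1)/d from by push_cast; field_simp,
      div_mul_eq_mul_div, le_div_iff₀ hd']
    nlinarith
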